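/- arXiv:2601.21017 — 4 statements merged into one kernel-verified Lean document; each statement's English description precedes it below -/
import Mathlib

section
/- Let I ⊆ ℝ be an interval and let ψ : (0,∞) × I → ℝ be twice continuously differentiable in r and once in t, and set u(r,t) := r^{−2} ψ(r,t). Then at any point (r,t) ∈ (0,∞) × I, ψ satisfies ψ_t = ψ_{rr} + (1/r)ψ_r − (2/r²)(ψ−1)(ψ−2)ψ if and only if u satisfies u_t = u_{rr} + (5/r)u_r + (6 − 2r²u)u². -/
/-- Equivalence of the equivariant Yang–Mills heat flow equation for `ψ` and the
six-dimensional radial heat equation for `u = r⁻² ψ`: at any point `(r,t)` with `r > 0`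
and `t` in the time interval `I`, `ψ_t = ψ_{rr} + (1/r)ψ_r − (2/r²)(ψ−1)(ψ−2)ψ` holds
if and only if `u_t = u_{rr} + (5/r)u_r + (6 − 2r²u)u²` holds. -/
theorem ym_psi_u_equation_equivalence (I : Set ℝ) (hI : I.OrdConnected)
    (ψ : ℝ → ℝ → ℝ)
    (hr2 : ∀ t ∈ I, ContDiffOn ℝ 2 (fun r' => ψ r' t) (Set.Ioi 0))
    (ht1 : ∀ r ∈ Set.Ioi (0:ℝ), ∀ t ∈ I, DifferentiableWithinAt ℝ (fun t' => ψ r t') I t)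
    (r t : ℝ) (hr : 0 < r) (htI : t ∈ I) :
    (derivWithin (fun t' => ψ r t') I t
        = deriv (fun r' => deriv (fun r'' => ψ r'' t) r') r
          + (1 / r) * deriv (fun r' => ψ r' t) r
          - (2 / r ^ 2) * (ψ r t - 1) * (ψ r t - 2) * ψ r t)
      ↔
    (derivWithin (fun t' => ψ r t' / r ^ 2) I t
        = deriv (fun r' => deriv (fun r'' => ψ r'' t / r'' ^ 2) r') r
          + (5 / r) * deriv (fun r' => ψ r' t / r' ^ 2) r
          + (6 - 2 * r ^ 2 * (ψ r t / r ^ 2)) * (ψ r t / r ^ 2) ^ 2) := by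
  have hrne : r ≠ 0 := ne_of_gt hr
  set f : ℝ → ℝ := fun r' => ψ r' t with hfdef
  have hf : ContDiffOn ℝ 2 f (Set.Ioi 0) := hr2 t htI
  have hfd : ContDiffOn ℝ 1 (deriv f) (Set.Ioi 0) :=
    hf.deriv_of_isOpen isOpen_Ioi (by norm_num)
  -- pointwise derivatives of f on Ioi 0
  have hb : ∀ x ∈ Set.Ioi (0:ℝ), HasDerivAt f (deriv f x) x := fun x hx =>
    (((hf.differentiableOn (by norm_num)).differentiableAt
      (isOpen_Ioi.mem_nhds hx))).hasDerivAt
  have hc : HasDerivAt (deriv f) (deriv (deriv f) r) r :=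
    ((hfd.differentiableOn (by norm_num)).differentiableAt (isOpen_Ioi.mem_nhds hr)).hasDerivAt
  set a := ψ r t with ha
  set b := deriv f r with hbr
  set c := deriv (deriv f) r with hcr
  set g : ℝ → ℝ := fun r' => ψ r' t / r' ^ 2 with hgdef
  -- first derivative of g on Ioi 0
  have hg : ∀ x ∈ Set.Ioi (0:ℝ),
      HasDerivAt g (deriv f x / x ^ 2 - 2 * ψ x t / x ^ 3) x := by
    intro x hx
    have hxne : x ≠ 0 := ne_of_gt hx
    have h2 : x ^ 2 ≠ 0 := pow_ne_zero _ hxne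
    have := (hb x hx).div (hasDerivAt_pow 2 x) h2
    refine this.congr_deriv ?_
    field_simp
    ring
  have hg1 : deriv g r = b / r ^ 2 - 2 * a / r ^ 3 := (hg r hr).deriv
  -- deriv g agrees with an explicit formula near r
  have heq : deriv g =ᶠ[nhds r] fun x => deriv f x / x ^ 2 - 2 * ψ x t / x ^ 3 := by
    filter_upwards [isOpen_Ioi.mem_nhds hr] with x hx
    exact (hg x hx).deriv
  -- second derivative of g at r
  have hphi : HasDerivAt (fun x => deriv f x / x ^ 2 - 2 * ψ x t / x ^ 3)
      (c / r ^ 2 - 4 * b / r ^ 3 + 6 * a / r ^ 4) r := by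
    have h2 : r ^ 2 ≠ 0 := pow_ne_zero _ hrne
    have h3 : r ^ 3 ≠ 0 := pow_ne_zero _ hrne
    have t1 := hc.div (hasDerivAt_pow 2 r) h2
    have t2 := ((hb r hr).const_mul (2:ℝ)).div (hasDerivAt_pow 3 r) h3
    have := t1.sub t2
    refine this.congr_deriv ?_
    field_simp
    ring
  have hg2 : deriv (deriv g) r = c / r ^ 2 - 4 * b / r ^ 3 + 6 * a / r ^ 4 := by
    rw [heq.deriv_eq]
    exact hphi.deriv
  -- time derivative relation
  have htime : derivWithin (fun t' => ψ r t' / r ^ 2) I t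
      = derivWithin (fun t' => ψ r t') I t / r ^ 2 := by
    by_cases hiso : nhdsWithin t (I \ {t}) = ⊥
    · exact derivWithin_div_const _ _
    · have hconv : Convex ℝ I := hI.convex
      have hmem : t ∈ closure (I \ {t}) := by
        rw [mem_closure_iff_nhdsWithin_neBot]
        exact ⟨hiso⟩
      have hcl : t ∈ closure I := closure_mono Set.diff_subset hmem
      have hint : (interior I).Nonempty := by
        by_contra hne
        rw [Set.not_nonempty_iff_eq_empty] at hne
        have hsub : I.Subsingleton := by
          intro x hx y hy
          by_contra hxy
          rcases lt_or_gt_of_ne hxy with h | h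
          · have : Set.Ioo x y ⊆ I := fun z hz =>
              hI.out hx hy ⟨le_of_lt hz.1, le_of_lt hz.2⟩
            have : Set.Ioo x y ⊆ interior I :=
              interior_maximal this isOpen_Ioo |>.trans (le_refl _)
            rcases Set.nonempty_Ioo.2 h with ⟨z, hz⟩
            exact absurd (this hz) (by simp [hne])
          · have : Set.Ioo y x ⊆ I := fun z hz =>
              hI.out hy hx ⟨le_of_lt hz.1, le_of_lt hz.2⟩
            have : Set.Ioo y x ⊆ interior I :=
              interior_maximal this isOpen_Ioo |>.trans (le_refl _)
            rcases Set.nonempty_Ioo.2 h with ⟨z, hz⟩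
            exact absurd (this hz) (by simp [hne])
        have : I \ {t} = ∅ := by
          ext x
          simp only [Set.mem_diff, Set.mem_singleton_iff, Set.mem_empty_iff_false,
            iff_false, not_and, not_not]
          intro hx
          exact hsub hx htI
        rw [this] at hiso
        simp [nhdsWithin_empty] at hiso
      have hud : UniqueDiffWithinAt ℝ I t := uniqueDiffWithinAt_convex hconv hint hcl
      exact derivWithin_div_const _ _
  set T := derivWithin (fun t' => ψ r t') I t with hT
  rw [htime, hg1, hg2]
  show T = deriv (deriv f) r + (1/r) * deriv f r - (2/r^2) * (a-1) * (a-2) * a ↔ _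
  rw [← hbr, ← hcr]
  have key : (c / r ^ 2 - 4 * b / r ^ 3 + 6 * a / r ^ 4)
      + (5 / r) * (b / r ^ 2 - 2 * a / r ^ 3)
      + (6 - 2 * r ^ 2 * (a / r ^ 2)) * (a / r ^ 2) ^ 2
      = (c + (1 / r) * b - (2 / r ^ 2) * (a - 1) * (a - 2) * a) / r ^ 2 := by
    field_simp
    ring
  rw [key]
  constructor
  · intro h; rw [h]
  · intro h
    have h2 : r ^ 2 ≠ 0 := pow_ne_zero _ hrne
    exact (div_left_inj' h2).mp h
end

section
/- There exists a constant C > 0 such that for every R ≥ 2 and every μ ∈ (0,1], | ∫₀^{4R} 24 ρ⁵/(1+ρ²)⁴ e^{−μρ²} dρ − 4 | ≤ C ( R^{−2} + μ R² ). -/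
open Real intervalIntegral

lemma tg_hasDerivAt (ρ : ℝ) :
    HasDerivAt (fun ρ : ℝ => -12/(1+ρ^2) + 12/(1+ρ^2)^2 - 4/(1+ρ^2)^3)
      (24 * ρ ^ 5 / (1 + ρ ^ 2) ^ 4) ρ := by
  have hne : (1 + ρ^2 : ℝ) ≠ 0 := by positivity
  have h1 : HasDerivAt (fun ρ : ℝ => 1 + ρ^2) (2*ρ) ρ := by
    simpa using (hasDerivAt_pow 2 ρ).const_add 1
  have i1 : HasDerivAt (fun ρ : ℝ => (1+ρ^2)⁻¹) (-(2*ρ)/(1+ρ^2)^2) ρ := h1.inv hne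
  have i2 : HasDerivAt (fun ρ : ℝ => ((1+ρ^2)^2)⁻¹)
      (-(2*(1+ρ^2)^1*(2*ρ))/((1+ρ^2)^2)^2) ρ := (h1.pow 2).inv (pow_ne_zero _ hne)
  have i3 : HasDerivAt (fun ρ : ℝ => ((1+ρ^2)^3)⁻¹)
      (-(3*(1+ρ^2)^2*(2*ρ))/((1+ρ^2)^3)^2) ρ := (h1.pow 3).inv (pow_ne_zero _ hne)
  have := ((i1.const_mul (-12:ℝ)).add (i2.const_mul (12:ℝ))).sub (i3.const_mul (4:ℝ))
  have e : (fun ρ : ℝ => -12/(1+ρ^2) + 12/(1+ρ^2)^2 - 4/(1+ρ^2)^3)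
      = ((fun y : ℝ => -12 * (1 + y ^ 2)⁻¹) + fun y => 12 * ((1 + y ^ 2) ^ 2)⁻¹)
        - fun y => 4 * ((1 + y ^ 2) ^ 3)⁻¹ := by
    funext x; simp only [Pi.add_apply, Pi.sub_apply, div_eq_mul_inv]
  rw [e]
  refine this.congr_deriv ?_
  field_simp
  ring

lemma tg_fund (X : ℝ) :
    (∫ ρ in (0:ℝ)..X, 24 * ρ ^ 5 / (1 + ρ ^ 2) ^ 4)
      = (-12/(1+X^2) + 12/(1+X^2)^2 - 4/(1+X^2)^3) - (-4) := by
  have hcont : Continuous (fun ρ : ℝ => 24 * ρ ^ 5 / (1 + ρ ^ 2) ^ 4) := by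
    apply Continuous.div (by continuity) (by continuity)
    intro x; positivity
  have := intervalIntegral.integral_eq_sub_of_hasDerivAt
    (f := fun ρ : ℝ => -12/(1+ρ^2) + 12/(1+ρ^2)^2 - 4/(1+ρ^2)^3)
    (fun ρ _ => tg_hasDerivAt ρ) (hcont.intervalIntegrable 0 X)
  rw [this]
  norm_num

set_option maxHeartbeats 1000000 in
/-- There exists `C > 0` such that for every `R ≥ 2` and `μ ∈ (0,1]`,
`|∫₀^{4R} 24 ρ⁵/(1+ρ²)⁴ e^{−μρ²} dρ − 4| ≤ C (R⁻² + μ R²)`. -/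
theorem truncated_gaussian_integral_estimate :
    ∃ C : ℝ, 0 < C ∧ ∀ R : ℝ, 2 ≤ R → ∀ μ : ℝ, μ ∈ Set.Ioc (0:ℝ) 1 →
      |(∫ ρ in (0:ℝ)..(4 * R), 24 * ρ ^ 5 / (1 + ρ ^ 2) ^ 4 * Real.exp (-μ * ρ ^ 2)) - 4|
        ≤ C * ((R ^ 2)⁻¹ + μ * R ^ 2) := by
  refine ⟨48, by norm_num, fun R hR μ hμ => ?_⟩
  obtain ⟨hμ0, hμ1⟩ := hμ
  have hR0 : (0:ℝ) < R := by linarith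
  set X : ℝ := 4 * R with hX
  have hX0 : (0:ℝ) < X := by positivity
  clear_value X
  have hcg : Continuous (fun ρ : ℝ => 24 * ρ ^ 5 / (1 + ρ ^ 2) ^ 4 * Real.exp (-μ * ρ ^ 2)) := by
    apply Continuous.mul _ (by continuity)
    apply Continuous.div (by continuity) (by continuity)
    intro x; positivity
  have hch : Continuous (fun ρ : ℝ => 24 * ρ ^ 5 / (1 + ρ ^ 2) ^ 4) := by
    apply Continuous.div (by continuity) (by continuity)
    intro x; positivity
  -- difference bound
  have hdiff : |(∫ ρ in (0:ℝ)..X, 24 * ρ ^ 5 / (1 + ρ ^ 2) ^ 4 * Real.exp (-μ * ρ ^ 2))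
      - ∫ ρ in (0:ℝ)..X, 24 * ρ ^ 5 / (1 + ρ ^ 2) ^ 4| ≤ 24 * μ * X := by
    rw [← intervalIntegral.integral_sub (hcg.intervalIntegrable 0 X) (hch.intervalIntegrable 0 X)]
    have := intervalIntegral.norm_integral_le_of_norm_le_const
      (a := (0:ℝ)) (b := X) (C := 24 * μ)
      (f := fun ρ => 24 * ρ ^ 5 / (1 + ρ ^ 2) ^ 4 * Real.exp (-μ * ρ ^ 2)
        - 24 * ρ ^ 5 / (1 + ρ ^ 2) ^ 4) ?_
    · rw [Real.norm_eq_abs] at this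
      calc _ ≤ 24 * μ * |X - 0| := this
        _ = 24 * μ * X := by rw [sub_zero, abs_of_pos hX0]
    · intro ρ hρ
      rw [Set.uIoc_of_le hX0.le] at hρ
      have hρ0 : 0 < ρ := hρ.1
      have hden : (0:ℝ) < (1 + ρ^2)^4 := by positivity
      have hh0 : 0 ≤ 24 * ρ ^ 5 / (1 + ρ ^ 2) ^ 4 := by positivity
      have hexple : Real.exp (-μ * ρ ^ 2) ≤ 1 := by
        rw [Real.exp_le_one_iff]; nlinarith
      have hexpge : 1 - μ * ρ ^ 2 ≤ Real.exp (-μ * ρ ^ 2) := by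
        have := Real.add_one_le_exp (-μ * ρ ^ 2)
        linarith
      have key : ρ ^ 7 ≤ (1 + ρ ^ 2) ^ 4 := by
        nlinarith [mul_nonneg (pow_nonneg hρ0.le 6) (sq_nonneg (2*ρ - 1)),
          pow_nonneg hρ0.le 6, sq_nonneg ρ, sq_nonneg (ρ^3 - ρ), sq_nonneg (ρ^2-1)]
      show |24 * ρ ^ 5 / (1 + ρ ^ 2) ^ 4 * Real.exp (-μ * ρ ^ 2)
        - 24 * ρ ^ 5 / (1 + ρ ^ 2) ^ 4| ≤ 24 * μ
      have heq : 24 * ρ ^ 5 / (1 + ρ ^ 2) ^ 4 * Real.exp (-μ * ρ ^ 2)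
          - 24 * ρ ^ 5 / (1 + ρ ^ 2) ^ 4
          = -(24 * ρ ^ 5 / (1 + ρ ^ 2) ^ 4 * (1 - Real.exp (-μ * ρ ^ 2))) := by ring
      rw [heq, abs_neg, abs_of_nonneg (by nlinarith)]
      have h1 : 24 * ρ ^ 5 / (1 + ρ ^ 2) ^ 4 * (1 - Real.exp (-μ * ρ ^ 2))
          ≤ 24 * ρ ^ 5 / (1 + ρ ^ 2) ^ 4 * (μ * ρ ^ 2) := by
        apply mul_le_mul_of_nonneg_left _ hh0
        linarith
      have h2 : 24 * ρ ^ 5 / (1 + ρ ^ 2) ^ 4 * (μ * ρ ^ 2) = 24 * μ * (ρ ^ 7 / (1 + ρ ^ 2) ^ 4) := by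
        field_simp
      have h3 : ρ ^ 7 / (1 + ρ ^ 2) ^ 4 ≤ 1 := by
        rw [div_le_one hden]; exact key
      calc 24 * ρ ^ 5 / (1 + ρ ^ 2) ^ 4 * (1 - Real.exp (-μ * ρ ^ 2))
          ≤ 24 * μ * (ρ ^ 7 / (1 + ρ ^ 2) ^ 4) := by rw [← h2]; exact h1
        _ ≤ 24 * μ * 1 := by
            apply mul_le_mul_of_nonneg_left h3 (by positivity)
        _ = 24 * μ := by ring
  -- tail bound
  have hfund := tg_fund X
  set u : ℝ := 1 + X ^ 2 with hu
  clear_value u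
  have hu1 : (16:ℝ) * R ^ 2 ≤ u := by
    simp only [hu, hX]; nlinarith
  have hu0 : (1:ℝ) ≤ u := by nlinarith
  have hupos : (0:ℝ) < u := by linarith
  have htail : |(∫ ρ in (0:ℝ)..X, 24 * ρ ^ 5 / (1 + ρ ^ 2) ^ 4) - 4| ≤ 48 * (R ^ 2)⁻¹ := by
    rw [hfund]
    have heq : (-12/u + 12/u^2 - 4/u^3) - (-4) - 4 = -((12*u^2 - 12*u + 4)/u^3) := by
      field_simp; ring
    have hnum : (0:ℝ) ≤ 12*u^2 - 12*u + 4 := by nlinarith [sq_nonneg (2*u-1)]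
    rw [heq, abs_neg, abs_of_nonneg (div_nonneg hnum (by positivity))]
    have h1 : (12*u^2 - 12*u + 4)/u^3 ≤ 12*u^2/u^3 := by
      gcongr
      · nlinarith
    have h2 : 12*u^2/u^3 = 12/u := by
      field_simp
    have h3 : 12/u ≤ 12/(16*R^2) := by
      gcongr
    have h4 : 12/(16*R^2) ≤ 48 * (R^2)⁻¹ := by
      rw [← div_eq_mul_inv, div_le_div_iff₀ (by positivity) (by positivity)]
      nlinarith
    calc (12*u^2 - 12*u + 4)/u^3 ≤ 12/u := by rw [← h2]; exact h1
      _ ≤ 12/(16*R^2) := h3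
      _ ≤ 48 * (R^2)⁻¹ := h4
  -- combine
  have hμR : 24 * μ * X ≤ 48 * (μ * R ^ 2) := by
    rw [hX]
    nlinarith [mul_nonneg hμ0.le (by nlinarith : (0:ℝ) ≤ R^2 - 2*R)]
  calc |(∫ ρ in (0:ℝ)..X, 24 * ρ ^ 5 / (1 + ρ ^ 2) ^ 4 * Real.exp (-μ * ρ ^ 2)) - 4|
      ≤ |(∫ ρ in (0:ℝ)..X, 24 * ρ ^ 5 / (1 + ρ ^ 2) ^ 4 * Real.exp (-μ * ρ ^ 2))
          - ∫ ρ in (0:ℝ)..X, 24 * ρ ^ 5 / (1 + ρ ^ 2) ^ 4|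
        + |(∫ ρ in (0:ℝ)..X, 24 * ρ ^ 5 / (1 + ρ ^ 2) ^ 4) - 4| := by
        exact abs_sub_le _ _ _
    _ ≤ 24 * μ * X + 48 * (R ^ 2)⁻¹ := add_le_add hdiff htail
    _ ≤ 48 * (μ * R ^ 2) + 48 * (R ^ 2)⁻¹ := by linarith
    _ = 48 * ((R ^ 2)⁻¹ + μ * R ^ 2) := by ring
end

section
/- Let n ≥ 1 be an integer, a ∈ [0,1) and 0 ≤ b < n. There is a constant C = C(n,a,b) such that for all t > 0 and all x ∈ ℝⁿ with |x| ≥ 1: ∫_{|y| ≤ |x|/2} e^{−|x−y|²/(4t)} ⟨y⟩^{−b} (log(2+|y|))^{−a} dy ≤ C e^{−|x|²/(16t)} |x|^{n−b} (log(2+|x|))^{−a}. -/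
open MeasureTheory

section NearOriginAux

open Set Metric
open scoped ENNReal

lemma my_lintegral_polar {E : Type*} [NormedAddCommGroup E] [NormedSpace ℝ E]
    [MeasurableSpace E] [BorelSpace E] [Nontrivial E] [FiniteDimensional ℝ E]
    (μ : Measure E) [μ.IsAddHaarMeasure] (f : ℝ → ℝ≥0∞) (hf : Measurable f) :
    ∫⁻ x, f ‖x‖ ∂μ = (Module.finrank ℝ E) * μ (ball 0 1) *
      ∫⁻ y in Ioi (0:ℝ), ENNReal.ofReal (y ^ (Module.finrank ℝ E - 1)) * f y := by
  calc
    ∫⁻ x, f ‖x‖ ∂μ = ∫⁻ x : ({(0:E)}ᶜ : Set E), f ‖(x : E)‖ ∂(μ.comap (↑)) := by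
      rw [lintegral_subtype_comap (measurableSet_singleton _).compl fun x ↦ f ‖x‖,
        MeasureTheory.restrict_compl_singleton]
    _ = ∫⁻ p : sphere (0:E) 1 × Ioi (0:ℝ), f p.2
          ∂(μ.toSphere.prod (.volumeIoiPow (Module.finrank ℝ E - 1))) :=
      by
        have h := μ.measurePreserving_homeomorphUnitSphereProd.lintegral_comp_emb
          (Homeomorph.measurableEmbedding _) (f ∘ Subtype.val ∘ Prod.snd)
        simpa using h
    _ = μ.toSphere univ * ∫⁻ r : Ioi (0:ℝ), f r ∂(Measure.volumeIoiPow (Module.finrank ℝ E - 1)) := by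
      rw [lintegral_prod (fun p : ↑(sphere (0:E) 1) × ↑(Ioi (0:ℝ)) => f ↑p.2)
        ((hf.comp (measurable_subtype_coe.comp measurable_snd)).aemeasurable)]
      simp [lintegral_const, mul_comm]
    _ = (Module.finrank ℝ E) * μ (ball 0 1) *
          ∫⁻ y in Ioi (0:ℝ), ENNReal.ofReal (y ^ (Module.finrank ℝ E - 1)) * f y := by
      rw [Measure.toSphere_apply_univ, Measure.volumeIoiPow,
        lintegral_withDensity_eq_lintegral_mul _
          ((measurable_subtype_coe.pow_const _).ennreal_ofReal)
          (show Measurable fun r : Ioi (0:ℝ) => f ↑r from hf.comp measurable_subtype_coe)]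
      simp only [Pi.mul_apply]
      rw [lintegral_subtype_comap measurableSet_Ioi
          (fun a ↦ ENNReal.ofReal (a ^ (Module.finrank ℝ E - 1)) * f a), mul_assoc]

lemma my_ball_lintegral (n : ℕ) (hn : 1 ≤ n) (c : ℝ) (hc0 : 0 < c) (hcn : c < n)
    (polar : ∀ (f : ℝ → ℝ≥0∞), Measurable f →
      ∫⁻ x : EuclideanSpace ℝ (Fin n), f ‖x‖ =
        (n : ℝ≥0∞) * volume (ball (0 : EuclideanSpace ℝ (Fin n)) 1) *
          ∫⁻ y in Ioi (0:ℝ), ENNReal.ofReal (y ^ (n - 1)) * f y) :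
    ∃ V : ℝ, 0 < V ∧ ∀ R : ℝ, 0 < R →
      (∫⁻ y in {y : EuclideanSpace ℝ (Fin n) | ‖y‖ ≤ R}, ENNReal.ofReal (‖y‖ ^ (-c)))
        ≤ ENNReal.ofReal (V * R ^ ((n:ℝ) - c)) := by
  set κ := (volume (ball (0 : EuclideanSpace ℝ (Fin n)) 1)).toReal with hκdef
  have hκpos : 0 < κ := by
    apply ENNReal.toReal_pos (ne_of_gt _) measure_ball_lt_top.ne
    exact measure_ball_pos _ _ one_pos
  have hnc : (0:ℝ) < (n:ℝ) - c := by linarith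
  refine ⟨n * κ / ((n:ℝ) - c), by
    apply div_pos _ hnc
    have : (0:ℝ) < n := by positivity
    positivity, fun R hR => ?_⟩
  have hmS : MeasurableSet {y : EuclideanSpace ℝ (Fin n) | ‖y‖ ≤ R} :=
    measurableSet_le measurable_norm measurable_const
  set f : ℝ → ℝ≥0∞ := (Iic R).indicator (fun s => ENNReal.ofReal (s ^ (-c))) with hfdef
  have hfm : Measurable f :=
    Measurable.indicator ((measurable_id.pow_const (-c)).ennreal_ofReal) measurableSet_Iic
  have h1 : (∫⁻ y in {y : EuclideanSpace ℝ (Fin n) | ‖y‖ ≤ R}, ENNReal.ofReal (‖y‖ ^ (-c)))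
      = ∫⁻ x : EuclideanSpace ℝ (Fin n), f ‖x‖ := by
    rw [← lintegral_indicator hmS]
    refine lintegral_congr fun y => ?_
    by_cases hy : ‖y‖ ≤ R
    · simp [hfdef, Set.indicator_of_mem, hy, Set.mem_setOf_eq]
    · simp [hfdef, Set.indicator_of_notMem, hy, Set.mem_setOf_eq]
  rw [h1, polar f hfm]
  have h2 : (∫⁻ y in Ioi (0:ℝ), ENNReal.ofReal (y ^ (n - 1)) * f y)
      = ∫⁻ y in Ioc (0:ℝ) R, ENNReal.ofReal (y ^ ((n:ℝ) - 1 - c)) := by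
    have e1 : ∀ y : ℝ, ENNReal.ofReal (y ^ (n - 1)) * f y
        = (Iic R).indicator (fun s => ENNReal.ofReal (s ^ (n - 1)) * ENNReal.ofReal (s ^ (-c))) y := by
      intro y
      by_cases hy : y ∈ Iic R
      · simp [hfdef, Set.indicator_of_mem hy]
      · simp [hfdef, Set.indicator_of_notMem hy]
    calc (∫⁻ y in Ioi (0:ℝ), ENNReal.ofReal (y ^ (n - 1)) * f y)
        = ∫⁻ y in Ioi (0:ℝ), (Iic R).indicator
            (fun s => ENNReal.ofReal (s ^ (n - 1)) * ENNReal.ofReal (s ^ (-c))) y := by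
          exact lintegral_congr fun y => e1 y
      _ = ∫⁻ y in Iic R ∩ Ioi (0:ℝ), ENNReal.ofReal (y ^ (n - 1)) * ENNReal.ofReal (y ^ (-c)) := by
          rw [lintegral_indicator measurableSet_Iic, Measure.restrict_restrict measurableSet_Iic]
      _ = ∫⁻ y in Ioc (0:ℝ) R, ENNReal.ofReal (y ^ (n - 1)) * ENNReal.ofReal (y ^ (-c)) := by
          rw [Set.inter_comm, Set.Ioi_inter_Iic]
      _ = ∫⁻ y in Ioc (0:ℝ) R, ENNReal.ofReal (y ^ ((n:ℝ) - 1 - c)) := by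
          refine setLIntegral_congr_fun measurableSet_Ioc (fun y hy => ?_)
          rw [← ENNReal.ofReal_mul (pow_nonneg hy.1.le _)]
          congr 1
          rw [← Real.rpow_natCast y (n - 1), ← Real.rpow_add hy.1, Nat.cast_sub hn]
          norm_num [sub_eq_add_neg]
  rw [h2]
  have hp : (-1:ℝ) < (n:ℝ) - 1 - c := by
    have : (1:ℝ) ≤ n := by exact_mod_cast hn
    linarith
  have hint : IntegrableOn (fun y : ℝ => y ^ ((n:ℝ) - 1 - c)) (Ioc 0 R) volume :=
    (intervalIntegral.intervalIntegrable_rpow' hp).1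
  have h3 : (∫⁻ y in Ioc (0:ℝ) R, ENNReal.ofReal (y ^ ((n:ℝ) - 1 - c)))
      = ENNReal.ofReal (∫ y in Ioc (0:ℝ) R, y ^ ((n:ℝ) - 1 - c)) := by
    rw [← ofReal_integral_eq_lintegral_ofReal hint]
    filter_upwards [ae_restrict_mem measurableSet_Ioc] with y hy
    exact Real.rpow_nonneg hy.1.le _
  have hval : (∫ y in Ioc (0:ℝ) R, y ^ ((n:ℝ) - 1 - c)) = R ^ ((n:ℝ) - c) / ((n:ℝ) - c) := by
    rw [← intervalIntegral.integral_of_le hR.le,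
      integral_rpow (Or.inl hp), Real.zero_rpow (by linarith)]
    norm_num
    ring_nf
  rw [h3, hval]
  have hballe : (n : ℝ≥0∞) * volume (ball (0 : EuclideanSpace ℝ (Fin n)) 1)
      = ENNReal.ofReal ((n : ℝ) * κ) := by
    rw [ENNReal.ofReal_mul (by positivity), ENNReal.ofReal_natCast,
      hκdef, ENNReal.ofReal_toReal measure_ball_lt_top.ne]
  rw [hballe, ← ENNReal.ofReal_mul (by positivity)]
  apply ENNReal.ofReal_le_ofReal
  apply le_of_eq
  ring

lemma my_log_le (ε : ℝ) (hε : 0 < ε) (v : ℝ) (hv : 1 ≤ v) : Real.log v ≤ v ^ ε / ε := by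
  have hv0 : (0:ℝ) < v := by linarith
  have h1 : ε * Real.log v = Real.log (v ^ ε) := (Real.log_rpow hv0 ε).symm
  have h2 : Real.log (v ^ ε) ≤ v ^ ε - 1 := Real.log_le_sub_one_of_pos (Real.rpow_pos_of_pos hv0 ε)
  rw [le_div_iff₀ hε]
  nlinarith [Real.rpow_pos_of_pos hv0 ε]

lemma my_log_ratio (ε : ℝ) (hε : 0 < ε) (a : ℝ) (ha0 : 0 ≤ a) (ha1 : a ≤ 1)
    (r X : ℝ) (hr : 0 ≤ r) (hrX : r ≤ X) :
    Real.log (2 + X) ^ a ≤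
      (1 + 1/(ε * Real.log 2)) * ((2 + X)/(2 + r)) ^ ε * Real.log (2 + r) ^ a := by
  have hu0 : (0:ℝ) < 2 + r := by linarith
  have hU0 : (0:ℝ) < 2 + X := by linarith
  have huU : 2 + r ≤ 2 + X := by linarith
  have hlog2 : (0:ℝ) < Real.log 2 := Real.log_pos (by norm_num)
  have hlu : Real.log 2 ≤ Real.log (2 + r) := Real.log_le_log (by norm_num) (by linarith)
  have hlu0 : (0:ℝ) < Real.log (2 + r) := lt_of_lt_of_le hlog2 hlu
  have hlU : Real.log (2 + r) ≤ Real.log (2 + X) := Real.log_le_log hu0 huU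
  set Q : ℝ := ((2 + X)/(2 + r)) ^ ε with hQ
  have hQ1 : (1:ℝ) ≤ Q := Real.one_le_rpow ((one_le_div hu0).2 huU) hε.le
  have hquot1 : (1:ℝ) ≤ Real.log (2 + X) / Real.log (2 + r) := (one_le_div hlu0).2 hlU
  -- ratio bound
  have hratio : Real.log (2 + X) / Real.log (2 + r) ≤ (1 + 1/(ε * Real.log 2)) * Q := by
    have hlogdiv : Real.log (2 + X) - Real.log (2 + r) = Real.log ((2 + X)/(2 + r)) :=
      (Real.log_div hU0.ne' hu0.ne').symm
    have hld : Real.log ((2 + X)/(2 + r)) ≤ Q / ε :=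
      my_log_le ε hε _ ((one_le_div hu0).2 huU)
    have step1 : Real.log (2 + X) / Real.log (2 + r)
        ≤ 1 + (Real.log (2 + X) - Real.log (2 + r)) / Real.log 2 := by
      rw [div_le_iff₀ hlu0]
      have h1 : (Real.log (2 + X) - Real.log (2 + r)) / Real.log 2 * Real.log 2
          = Real.log (2 + X) - Real.log (2 + r) := by field_simp
      have h2 : (Real.log (2 + X) - Real.log (2 + r)) / Real.log 2 * Real.log (2 + r)
          ≥ (Real.log (2 + X) - Real.log (2 + r)) / Real.log 2 * Real.log 2 := by
        apply mul_le_mul_of_nonneg_left hlu (div_nonneg (by linarith) hlog2.le)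
      nlinarith
    have step2 : 1 + (Real.log (2 + X) - Real.log (2 + r)) / Real.log 2
        ≤ 1 + (Q / ε) / Real.log 2 := by
      have h : Real.log (2 + X) - Real.log (2 + r) ≤ Q / ε := by rw [hlogdiv]; exact hld
      have h' : (Real.log (2 + X) - Real.log (2 + r)) / Real.log 2 ≤ (Q / ε) / Real.log 2 := by
        gcongr
      linarith
    have step3 : 1 + (Q / ε) / Real.log 2 ≤ (1 + 1/(ε * Real.log 2)) * Q := by
      have h3 : (Q / ε) / Real.log 2 = (1/(ε * Real.log 2)) * Q := by field_simp
      rw [h3]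
      nlinarith [mul_pos hε hlog2]
    linarith
  -- raise to power a
  have hmain : Real.log (2 + X) ^ a
      = (Real.log (2 + X) / Real.log (2 + r)) ^ a * Real.log (2 + r) ^ a := by
    rw [← Real.mul_rpow (by positivity) hlu0.le, div_mul_cancel₀ _ hlu0.ne']
  rw [hmain]
  have hpow : (Real.log (2 + X) / Real.log (2 + r)) ^ a
      ≤ Real.log (2 + X) / Real.log (2 + r) := by
    calc (Real.log (2 + X) / Real.log (2 + r)) ^ a
        ≤ (Real.log (2 + X) / Real.log (2 + r)) ^ (1:ℝ) :=
          Real.rpow_le_rpow_of_exponent_le hquot1 ha1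
      _ = _ := Real.rpow_one _
  have hB : (0:ℝ) ≤ Real.log (2 + r) ^ a := Real.rpow_nonneg hlu0.le a
  calc (Real.log (2 + X) / Real.log (2 + r)) ^ a * Real.log (2 + r) ^ a
      ≤ ((1 + 1/(ε * Real.log 2)) * Q) * Real.log (2 + r) ^ a := by
        exact mul_le_mul_of_nonneg_right (le_trans hpow hratio) hB
    _ = (1 + 1/(ε * Real.log 2)) * ((2 + X)/(2 + r)) ^ ε * Real.log (2 + r) ^ a := by rw [hQ]

theorem near_origin_region_estimate' (n : ℕ) (hn : 1 ≤ n) (a b : ℝ)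
    (ha : a ∈ Set.Ico (0:ℝ) 1) (hb0 : 0 ≤ b) (hbn : b < n)
    (polar : ∀ (f : ℝ → ℝ≥0∞), Measurable f →
      ∫⁻ x : EuclideanSpace ℝ (Fin n), f ‖x‖ =
        (n : ℝ≥0∞) * volume (ball (0 : EuclideanSpace ℝ (Fin n)) 1) *
          ∫⁻ y in Ioi (0:ℝ), ENNReal.ofReal (y ^ (n - 1)) * f y)
    (ball_lint : ∀ c : ℝ, 0 < c → c < n → ∃ V : ℝ, 0 < V ∧ ∀ R : ℝ, 0 < R →
      (∫⁻ y in {y : EuclideanSpace ℝ (Fin n) | ‖y‖ ≤ R}, ENNReal.ofReal (‖y‖ ^ (-c)))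
        ≤ ENNReal.ofReal (V * R ^ ((n:ℝ) - c)))
    (logratio : ∀ ε : ℝ, 0 < ε → ∀ r X : ℝ, 0 ≤ r → r ≤ X →
      Real.log (2 + X) ^ a ≤
        (1 + 1/(ε * Real.log 2)) * ((2 + X)/(2 + r)) ^ ε * Real.log (2 + r) ^ a) :
    ∃ C : ℝ, 0 < C ∧ ∀ t : ℝ, 0 < t → ∀ x : EuclideanSpace ℝ (Fin n), 1 ≤ ‖x‖ →
      (∫ y in {y : EuclideanSpace ℝ (Fin n) | ‖y‖ ≤ ‖x‖ / 2},
          Real.exp (-‖x - y‖ ^ 2 / (4 * t))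
            * Real.sqrt (1 + ‖y‖ ^ 2) ^ (-b) * Real.log (2 + ‖y‖) ^ (-a))
        ≤ C * Real.exp (-‖x‖ ^ 2 / (16 * t)) * ‖x‖ ^ ((n : ℝ) - b)
          * Real.log (2 + ‖x‖) ^ (-a) := by
  obtain ⟨ha0, ha1⟩ := ha
  haveI : Nontrivial (EuclideanSpace ℝ (Fin n)) :=
    Module.nontrivial_of_finrank_pos (R := ℝ) (by rw [finrank_euclideanSpace_fin]; exact hn)
  have hn' : (1:ℝ) ≤ n := by exact_mod_cast hn
  set ε : ℝ := ((n:ℝ) - b)/2 with hεdef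
  have hε : 0 < ε := by rw [hεdef]; linarith
  set c : ℝ := b + ε with hcdef
  have hc0 : 0 < c := by rw [hcdef]; linarith
  have hcn : c < n := by rw [hcdef, hεdef]; linarith
  obtain ⟨V, hV, hVle⟩ := ball_lint c hc0 hcn
  set K : ℝ := 1 + 1/(ε * Real.log 2) with hKdef
  have hlog2 : (0:ℝ) < Real.log 2 := Real.log_pos (by norm_num)
  have hK1 : (1:ℝ) ≤ K := by
    rw [hKdef]
    have : 0 < 1/(ε * Real.log 2) := by positivity
    linarith
  have hK0 : (0:ℝ) < K := lt_of_lt_of_le one_pos hK1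
  have h3ε : (0:ℝ) < (3:ℝ) ^ ε := Real.rpow_pos_of_pos (by norm_num) ε
  refine ⟨K * 3 ^ ε * V, by positivity, fun t ht x hX => ?_⟩
  have hX0 : (0:ℝ) < ‖x‖ := lt_of_lt_of_le one_pos hX
  have hlogX : (0:ℝ) < Real.log (2 + ‖x‖) := Real.log_pos (by linarith)
  have hLX : (0:ℝ) ≤ Real.log (2 + ‖x‖) ^ (-a) := Real.rpow_nonneg hlogX.le _
  set S : Set (EuclideanSpace ℝ (Fin n)) := {y | ‖y‖ ≤ ‖x‖ / 2} with hSdef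
  have hmS : MeasurableSet S := measurableSet_le measurable_norm measurable_const
  set f : EuclideanSpace ℝ (Fin n) → ℝ := fun y =>
    Real.exp (-‖x - y‖ ^ 2 / (4 * t))
      * Real.sqrt (1 + ‖y‖ ^ 2) ^ (-b) * Real.log (2 + ‖y‖) ^ (-a) with hfdef
  have hfc : Continuous f := by
    rw [hfdef]
    apply Continuous.mul
    · apply Continuous.mul
      · exact Real.continuous_exp.comp (by fun_prop)
      · apply Continuous.rpow_const
        · exact Real.continuous_sqrt.comp (by fun_prop)
        · intro y
          left
          have : (0:ℝ) < 1 + ‖y‖ ^ 2 := by positivity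
          exact (Real.sqrt_pos.2 this).ne'
    · apply Continuous.rpow_const
      · apply Continuous.log (by fun_prop)
        intro y
        have := norm_nonneg y
        positivity
      · intro y
        left
        have := norm_nonneg y
        exact (Real.log_pos (by linarith)).ne'
  have hfnn : ∀ y, 0 ≤ f y := by
    intro y
    rw [hfdef]
    have h1 : (0:ℝ) ≤ Real.log (2 + ‖y‖) := Real.log_nonneg (by have := norm_nonneg y; linarith)
    exact mul_nonneg (mul_nonneg (Real.exp_nonneg _)
      (Real.rpow_nonneg (Real.sqrt_nonneg _) _)) (Real.rpow_nonneg h1 _)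
  set E : ℝ := Real.exp (-‖x‖ ^ 2 / (16 * t)) with hEdef
  have hE0 : (0:ℝ) < E := Real.exp_pos _
  set M : ℝ := K * E * (2 + ‖x‖) ^ ε * Real.log (2 + ‖x‖) ^ (-a) with hMdef
  have hM0 : (0:ℝ) ≤ M := by
    rw [hMdef]
    have h1 : (0:ℝ) ≤ (2 + ‖x‖) ^ ε := Real.rpow_nonneg (by linarith) _
    exact mul_nonneg (mul_nonneg (mul_nonneg hK0.le hE0.le) h1) hLX
  -- pointwise bound
  have hpt : ∀ y, y ∈ S → y ≠ 0 → f y ≤ M * ‖y‖ ^ (-c) := by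
    intro y hyS hy0
    have hr0 : (0:ℝ) < ‖y‖ := norm_pos_iff.2 hy0
    have hyS' : ‖y‖ ≤ ‖x‖ / 2 := hyS
    have hrX : ‖y‖ ≤ ‖x‖ := by linarith
    have hlogy : (0:ℝ) < Real.log (2 + ‖y‖) := Real.log_pos (by linarith)
    -- exponential factor
    have hexp : Real.exp (-‖x - y‖ ^ 2 / (4 * t)) ≤ E := by
      rw [hEdef]
      apply Real.exp_le_exp.2
      rw [neg_div, neg_div, neg_le_neg_iff, div_le_div_iff₀ (by positivity) (by positivity)]
      have hxy : ‖x‖ / 2 ≤ ‖x - y‖ := by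
        have h := norm_sub_norm_le x y
        linarith
      have hsq2 : (‖x‖/2)^2 ≤ ‖x - y‖^2 := pow_le_pow_left₀ (by positivity) hxy 2
      nlinarith [mul_le_mul_of_nonneg_right hsq2 (by positivity : (0:ℝ) ≤ 16*t)]
    -- sqrt factor
    have hsq : Real.sqrt (1 + ‖y‖ ^ 2) ^ (-b) ≤ ‖y‖ ^ (-b) := by
      apply Real.rpow_le_rpow_of_nonpos hr0 _ (neg_nonpos.2 hb0)
      calc ‖y‖ = Real.sqrt (‖y‖ ^ 2) := (Real.sqrt_sq (norm_nonneg y)).symm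
        _ ≤ Real.sqrt (1 + ‖y‖ ^ 2) := Real.sqrt_le_sqrt (by linarith)
    have h2r : (2 + ‖y‖) ^ (-ε) ≤ ‖y‖ ^ (-ε) :=
      Real.rpow_le_rpow_of_nonpos hr0 (by linarith) (neg_nonpos.2 hε.le)
    -- log factor
    have hlogb : Real.log (2 + ‖y‖) ^ (-a)
        ≤ K * ((2 + ‖x‖)/(2 + ‖y‖)) ^ ε * Real.log (2 + ‖x‖) ^ (-a) := by
      have hA : (0:ℝ) < Real.log (2 + ‖x‖) ^ a := Real.rpow_pos_of_pos hlogX a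
      have hB : (0:ℝ) < Real.log (2 + ‖y‖) ^ a := Real.rpow_pos_of_pos hlogy a
      have hQ0 : (0:ℝ) < ((2 + ‖x‖)/(2 + ‖y‖)) ^ ε :=
        Real.rpow_pos_of_pos (by positivity) ε
      have hlr := logratio ε hε ‖y‖ ‖x‖ hr0.le hrX
      rw [← hKdef] at hlr
      rw [Real.rpow_neg hlogy.le, Real.rpow_neg hlogX.le,
        show K * ((2 + ‖x‖)/(2 + ‖y‖)) ^ ε * (Real.log (2 + ‖x‖) ^ a)⁻¹
          = K * ((2 + ‖x‖)/(2 + ‖y‖)) ^ ε / Real.log (2 + ‖x‖) ^ a from by ring,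
        le_div_iff₀ hA]
      calc (Real.log (2 + ‖y‖) ^ a)⁻¹ * Real.log (2 + ‖x‖) ^ a
          ≤ (Real.log (2 + ‖y‖) ^ a)⁻¹
              * (K * ((2 + ‖x‖)/(2 + ‖y‖)) ^ ε * Real.log (2 + ‖y‖) ^ a) :=
            mul_le_mul_of_nonneg_left hlr (inv_nonneg.2 hB.le)
        _ = K * ((2 + ‖x‖)/(2 + ‖y‖)) ^ ε := by field_simp
    -- combine
    have hQeq : ((2 + ‖x‖)/(2 + ‖y‖)) ^ ε = (2 + ‖x‖) ^ ε * (2 + ‖y‖) ^ (-ε) := by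
      rw [Real.div_rpow (by linarith) (by linarith), Real.rpow_neg (by linarith), div_eq_mul_inv]
    have hprod : (2 + ‖y‖) ^ (-ε) * Real.sqrt (1 + ‖y‖ ^ 2) ^ (-b) ≤ ‖y‖ ^ (-c) := by
      calc (2 + ‖y‖) ^ (-ε) * Real.sqrt (1 + ‖y‖ ^ 2) ^ (-b)
          ≤ ‖y‖ ^ (-ε) * ‖y‖ ^ (-b) :=
            mul_le_mul h2r hsq (Real.rpow_nonneg (Real.sqrt_nonneg _) _)
              (Real.rpow_nonneg hr0.le _)
        _ = ‖y‖ ^ (-c) := by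
            rw [← Real.rpow_add hr0]
            congr 1
            rw [hcdef]; ring
    have hPnn : (0:ℝ) ≤ Real.sqrt (1 + ‖y‖ ^ 2) ^ (-b) :=
      Real.rpow_nonneg (Real.sqrt_nonneg _) _
    have hLynn : (0:ℝ) ≤ Real.log (2 + ‖y‖) ^ (-a) := Real.rpow_nonneg hlogy.le _
    calc f y = Real.exp (-‖x - y‖ ^ 2 / (4 * t)) * Real.sqrt (1 + ‖y‖ ^ 2) ^ (-b)
          * Real.log (2 + ‖y‖) ^ (-a) := rfl
      _ ≤ (E * Real.sqrt (1 + ‖y‖ ^ 2) ^ (-b))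
          * (K * ((2 + ‖x‖)/(2 + ‖y‖)) ^ ε * Real.log (2 + ‖x‖) ^ (-a)) := by
          apply mul_le_mul (mul_le_mul_of_nonneg_right hexp hPnn) hlogb hLynn
          exact mul_nonneg hE0.le hPnn
      _ = (K * E * Real.log (2 + ‖x‖) ^ (-a))
          * (((2 + ‖x‖)/(2 + ‖y‖)) ^ ε * Real.sqrt (1 + ‖y‖ ^ 2) ^ (-b)) := by ring
      _ = (K * E * Real.log (2 + ‖x‖) ^ (-a))
          * ((2 + ‖x‖) ^ ε * ((2 + ‖y‖) ^ (-ε) * Real.sqrt (1 + ‖y‖ ^ 2) ^ (-b))) := by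
          rw [hQeq]; ring
      _ ≤ (K * E * Real.log (2 + ‖x‖) ^ (-a))
          * ((2 + ‖x‖) ^ ε * ‖y‖ ^ (-c)) := by
          apply mul_le_mul_of_nonneg_left _ (mul_nonneg (mul_nonneg hK0.le hE0.le) hLX)
          exact mul_le_mul_of_nonneg_left hprod (Real.rpow_nonneg (by linarith) _)
      _ = M * ‖y‖ ^ (-c) := by rw [hMdef]; ring
  -- pass to lintegrals
  have hRHS0 : (0:ℝ) ≤ K * 3 ^ ε * V * E * ‖x‖ ^ ((n:ℝ) - b) * Real.log (2 + ‖x‖) ^ (-a) := by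
    have : (0:ℝ) ≤ ‖x‖ ^ ((n:ℝ) - b) := Real.rpow_nonneg hX0.le _
    exact mul_nonneg (mul_nonneg (mul_nonneg (mul_nonneg (mul_nonneg hK0.le h3ε.le) hV.le)
      hE0.le) this) hLX
  have hmain : (∫⁻ y in S, ENNReal.ofReal (f y))
      ≤ ENNReal.ofReal (K * 3 ^ ε * V * E * ‖x‖ ^ ((n:ℝ) - b)
          * Real.log (2 + ‖x‖) ^ (-a)) := by
    calc (∫⁻ y in S, ENNReal.ofReal (f y))
        ≤ ∫⁻ y in S, ENNReal.ofReal (M * ‖y‖ ^ (-c)) := by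
          apply lintegral_mono_ae
          have h0 : ∀ᵐ (y : EuclideanSpace ℝ (Fin n)) ∂(volume.restrict S),
              y ≠ (0 : EuclideanSpace ℝ (Fin n)) := by
            apply ae_restrict_of_ae
            simpa using (Set.countable_singleton (0:EuclideanSpace ℝ (Fin n))).ae_notMem volume
          filter_upwards [ae_restrict_mem hmS, h0] with y hyS hy0
          exact ENNReal.ofReal_le_ofReal (hpt y hyS hy0)
      _ = ENNReal.ofReal M * ∫⁻ y in S, ENNReal.ofReal (‖y‖ ^ (-c)) := by
          simp_rw [ENNReal.ofReal_mul hM0]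
          rw [lintegral_const_mul _ ((measurable_norm.pow_const (-c)).ennreal_ofReal)]
      _ ≤ ENNReal.ofReal M * ENNReal.ofReal (V * (‖x‖/2) ^ ((n:ℝ) - c)) :=
          mul_le_mul_right (hVle (‖x‖/2) (by linarith)) _
      _ = ENNReal.ofReal (M * (V * (‖x‖/2) ^ ((n:ℝ) - c))) := (ENNReal.ofReal_mul hM0).symm
      _ ≤ ENNReal.ofReal (K * 3 ^ ε * V * E * ‖x‖ ^ ((n:ℝ) - b)
            * Real.log (2 + ‖x‖) ^ (-a)) := by
          apply ENNReal.ofReal_le_ofReal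
          have h3X : (2 + ‖x‖) ^ ε ≤ 3 ^ ε * ‖x‖ ^ ε := by
            calc (2 + ‖x‖) ^ ε ≤ (3 * ‖x‖) ^ ε :=
                  Real.rpow_le_rpow (by linarith) (by linarith) hε.le
              _ = 3 ^ ε * ‖x‖ ^ ε := Real.mul_rpow (by norm_num) hX0.le
          have hhalf : (‖x‖/2) ^ ((n:ℝ) - c) ≤ ‖x‖ ^ ((n:ℝ) - c) :=
            Real.rpow_le_rpow (by positivity) (by linarith) (by linarith)
          have hexps : ε + ((n:ℝ) - c) = (n:ℝ) - b := by rw [hcdef]; ring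
          have step : (2 + ‖x‖) ^ ε * (‖x‖/2) ^ ((n:ℝ) - c) ≤ 3 ^ ε * ‖x‖ ^ ((n:ℝ) - b) := by
            calc (2 + ‖x‖) ^ ε * (‖x‖/2) ^ ((n:ℝ) - c)
                ≤ (3 ^ ε * ‖x‖ ^ ε) * ‖x‖ ^ ((n:ℝ) - c) := by
                  apply mul_le_mul h3X hhalf (Real.rpow_nonneg (by positivity) _)
                  positivity
              _ = 3 ^ ε * (‖x‖ ^ ε * ‖x‖ ^ ((n:ℝ) - c)) := by ring
              _ = 3 ^ ε * ‖x‖ ^ ((n:ℝ) - b) := by rw [← Real.rpow_add hX0, hexps]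
          calc M * (V * (‖x‖/2) ^ ((n:ℝ) - c))
              = (K * E * Real.log (2 + ‖x‖) ^ (-a) * V)
                  * ((2 + ‖x‖) ^ ε * (‖x‖/2) ^ ((n:ℝ) - c)) := by rw [hMdef]; ring
            _ ≤ (K * E * Real.log (2 + ‖x‖) ^ (-a) * V) * (3 ^ ε * ‖x‖ ^ ((n:ℝ) - b)) := by
                apply mul_le_mul_of_nonneg_left step
                exact mul_nonneg (mul_nonneg (mul_nonneg hK0.le hE0.le) hLX) hV.le
            _ = K * 3 ^ ε * V * E * ‖x‖ ^ ((n:ℝ) - b) * Real.log (2 + ‖x‖) ^ (-a) := by ring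
  have heq : (∫ y in S, f y) = (∫⁻ y in S, ENNReal.ofReal (f y)).toReal :=
    integral_eq_lintegral_of_nonneg_ae (ae_of_all _ hfnn) hfc.aestronglyMeasurable.restrict
  calc (∫ y in S, f y) = (∫⁻ y in S, ENNReal.ofReal (f y)).toReal := heq
    _ ≤ K * 3 ^ ε * V * E * ‖x‖ ^ ((n:ℝ) - b) * Real.log (2 + ‖x‖) ^ (-a) :=
        ENNReal.toReal_le_of_le_ofReal hRHS0 hmain

end NearOriginAux


/-- Near-origin region estimate in the proof of Lemma 2.3: for `|x| ≥ 1`,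
`∫_{|y| ≤ |x|/2} e^{−|x−y|²/(4t)} ⟨y⟩^{−b}(log(2+|y|))^{−a} dy
  ≤ C e^{−|x|²/(16t)} |x|^{n−b} (log(2+|x|))^{−a}`. -/
theorem near_origin_region_estimate (n : ℕ) (hn : 1 ≤ n) (a b : ℝ)
    (ha : a ∈ Set.Ico (0:ℝ) 1) (hb0 : 0 ≤ b) (hbn : b < n) :
    ∃ C : ℝ, 0 < C ∧ ∀ t : ℝ, 0 < t → ∀ x : EuclideanSpace ℝ (Fin n), 1 ≤ ‖x‖ →
      (∫ y in {y : EuclideanSpace ℝ (Fin n) | ‖y‖ ≤ ‖x‖ / 2},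
          Real.exp (-‖x - y‖ ^ 2 / (4 * t))
            * Real.sqrt (1 + ‖y‖ ^ 2) ^ (-b) * Real.log (2 + ‖y‖) ^ (-a))
        ≤ C * Real.exp (-‖x‖ ^ 2 / (16 * t)) * ‖x‖ ^ ((n : ℝ) - b)
          * Real.log (2 + ‖x‖) ^ (-a) := by
  haveI : Nontrivial (EuclideanSpace ℝ (Fin n)) :=
    Module.nontrivial_of_finrank_pos (R := ℝ) (by rw [finrank_euclideanSpace_fin]; exact hn)
  have polar : ∀ (f : ℝ → ENNReal), Measurable f →
      ∫⁻ x : EuclideanSpace ℝ (Fin n), f ‖x‖ =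
        (n : ENNReal) * volume (Metric.ball (0 : EuclideanSpace ℝ (Fin n)) 1) *
          ∫⁻ y in Set.Ioi (0:ℝ), ENNReal.ofReal (y ^ (n - 1)) * f y := by
    intro f hf
    have := my_lintegral_polar (volume : Measure (EuclideanSpace ℝ (Fin n))) f hf
    rwa [finrank_euclideanSpace_fin] at this
  exact near_origin_region_estimate' n hn a b ha hb0 hbn polar
    (fun c hc0 hcn => my_ball_lintegral n hn c hc0 hcn polar)
    (fun ε hε r X hr hrX => my_log_ratio ε hε a ha.1 ha.2.le r X hr hrX)
end

section
/- Let n ≥ 1 be an integer, a ∈ [0,1) and 0 ≤ b < n. There is a constant C = C(n,a,b) such that for all t > 0 and all x ∈ ℝⁿ with |x| ≥ √t: ∫_{|y| ≥ 2|x|} e^{−|y|²/(16t)} ⟨y⟩^{−b} (log(2+|y|))^{−a} dy ≤ C t^{(n−b)/2} (log(2+|x|))^{−a} e^{−|x|²/(8t)}. -/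
open MeasureTheory

lemma gaussian_integrable_euclid (n : ℕ) :
    Integrable (fun z : EuclideanSpace ℝ (Fin n) => Real.exp (-‖z‖ ^ 2 / 32)) := by
  have h := (GaussianFourier.integrable_cexp_neg_mul_sq_norm_add (V := EuclideanSpace ℝ (Fin n))
      (b := (32⁻¹ : ℂ)) (by norm_num) 0 0).norm
  convert h using 2 with z
  simp [Complex.norm_exp, neg_div, div_eq_inv_mul, ← Complex.ofReal_pow]

lemma psi_integrable (n : ℕ) (b : ℝ) (hb0 : 0 ≤ b) :
    Integrable (fun z : EuclideanSpace ℝ (Fin n) =>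
      (max 1 ‖z‖) ^ (-b) * Real.exp (-‖z‖ ^ 2 / 32)) := by
  have hcont : Continuous fun z : EuclideanSpace ℝ (Fin n) =>
      (max 1 ‖z‖) ^ (-b) * Real.exp (-‖z‖ ^ 2 / 32) := by
    apply Continuous.mul
    · exact (continuous_const.max continuous_norm).rpow_const
        (fun z => Or.inl (by positivity))
    · exact (((continuous_norm.pow 2).neg).div_const 32).rexp
  refine (gaussian_integrable_euclid n).mono' hcont.aestronglyMeasurable ?_
  filter_upwards with z
  have h1 : (0:ℝ) ≤ (max 1 ‖z‖) ^ (-b) * Real.exp (-‖z‖ ^ 2 / 32) := by positivity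
  rw [Real.norm_of_nonneg h1]
  calc (max 1 ‖z‖) ^ (-b) * Real.exp (-‖z‖ ^ 2 / 32)
      ≤ 1 * Real.exp (-‖z‖ ^ 2 / 32) := by
        apply mul_le_mul_of_nonneg_right
          (Real.rpow_le_one_of_one_le_of_nonpos (le_max_left _ _) (by linarith))
          (Real.exp_nonneg _)
    _ = Real.exp (-‖z‖ ^ 2 / 32) := one_mul _

set_option maxHeartbeats 1000000 in
/-- Far-field region estimate in the proof of Lemma 2.3: for `|x| ≥ √t`,
`∫_{|y| ≥ 2|x|} e^{−|y|²/(16t)} ⟨y⟩^{−b}(log(2+|y|))^{−a} dy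
  ≤ C t^{(n−b)/2} (log(2+|x|))^{−a} e^{−|x|²/(8t)}`. -/
theorem far_field_region_estimate (n : ℕ) (hn : 1 ≤ n) (a b : ℝ)
    (ha : a ∈ Set.Ico (0:ℝ) 1) (hb0 : 0 ≤ b) (hbn : b < n) :
    ∃ C : ℝ, 0 < C ∧ ∀ t : ℝ, 0 < t → ∀ x : EuclideanSpace ℝ (Fin n),
      Real.sqrt t ≤ ‖x‖ →
      (∫ y in {y : EuclideanSpace ℝ (Fin n) | 2 * ‖x‖ ≤ ‖y‖},
          Real.exp (-‖y‖ ^ 2 / (16 * t))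
            * Real.sqrt (1 + ‖y‖ ^ 2) ^ (-b) * Real.log (2 + ‖y‖) ^ (-a))
        ≤ C * t ^ (((n : ℝ) - b) / 2) * Real.log (2 + ‖x‖) ^ (-a)
          * Real.exp (-‖x‖ ^ 2 / (8 * t)) := by
  obtain ⟨ha0, ha1⟩ := ha
  set ψ : EuclideanSpace ℝ (Fin n) → ℝ :=
    fun z => (max 1 ‖z‖) ^ (-b) * Real.exp (-‖z‖ ^ 2 / 32) with hψdef
  have hψ_nonneg : ∀ z, 0 ≤ ψ z := fun z => by positivity
  have hψ_int : Integrable ψ := psi_integrable n b hb0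
  set K : ℝ := ∫ z, ψ z with hKdef
  have hK0 : 0 ≤ K := integral_nonneg hψ_nonneg
  refine ⟨K + 1, by linarith, fun t ht x hsx => ?_⟩
  set s : ℝ := Real.sqrt t with hsdef
  have ht2 : 0 < s := Real.sqrt_pos.2 ht
  have hs2 : s ^ 2 = t := Real.sq_sqrt ht.le
  set L : ℝ := Real.log (2 + ‖x‖) ^ (-a) with hLdef
  set Ex : ℝ := Real.exp (-‖x‖ ^ 2 / (8 * t)) with hExdef
  have hL0 : 0 ≤ L := Real.rpow_nonneg
    (Real.log_nonneg (by linarith [norm_nonneg x])) _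
  set c : ℝ := L * Ex * t ^ (-(b / 2)) with hcdef
  have hc0 : 0 ≤ c := by positivity
  set g : EuclideanSpace ℝ (Fin n) → ℝ := fun y => c * ψ (s⁻¹ • y) with hgdef
  have hg_int : Integrable g := (hψ_int.comp_smul (inv_ne_zero ht2.ne')).const_mul c
  have hg_nonneg : ∀ y, 0 ≤ g y := fun y => mul_nonneg hc0 (hψ_nonneg _)
  set S : Set (EuclideanSpace ℝ (Fin n)) := {y | 2 * ‖x‖ ≤ ‖y‖} with hSdef
  -- pointwise bound on S
  have key : ∀ y ∈ S, Real.exp (-‖y‖ ^ 2 / (16 * t))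
      * Real.sqrt (1 + ‖y‖ ^ 2) ^ (-b) * Real.log (2 + ‖y‖) ^ (-a) ≤ g y := by
    intro y hy
    have hy' : 2 * ‖x‖ ≤ ‖y‖ := hy
    have hyx : 2 * s ≤ ‖y‖ := le_trans (by linarith) hy'
    have hy0 : 0 < ‖y‖ := lt_of_lt_of_le (by positivity) hyx
    -- rewrite g y
    have hnorm : ‖s⁻¹ • y‖ = s⁻¹ * ‖y‖ := by
      rw [norm_smul, Real.norm_eq_abs, abs_of_pos (inv_pos.2 ht2)]
    have hmax : max 1 ‖s⁻¹ • y‖ = s⁻¹ * ‖y‖ := by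
      rw [hnorm, max_eq_right]
      calc (1:ℝ) = s⁻¹ * s := (inv_mul_cancel₀ ht2.ne').symm
        _ ≤ s⁻¹ * ‖y‖ := by
            apply mul_le_mul_of_nonneg_left (by linarith) (by positivity)
    have hsq : ‖s⁻¹ • y‖ ^ 2 / 32 = ‖y‖ ^ 2 / (32 * t) := by
      rw [hnorm, mul_pow, inv_pow, hs2]; ring
    have hψy : ψ (s⁻¹ • y) = (s⁻¹ * ‖y‖) ^ (-b) * Real.exp (-‖y‖ ^ 2 / (32 * t)) := by
      rw [hψdef]
      dsimp only
      rw [hmax, neg_div, neg_div, hsq]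
    have hsb : s ^ b = t ^ (b / 2) := by
      rw [hsdef, Real.sqrt_eq_rpow, ← Real.rpow_mul ht.le]
      congr 1
      ring
    have hrs : (s⁻¹ * ‖y‖) ^ (-b) = t ^ (b / 2) * ‖y‖ ^ (-b) := by
      rw [Real.mul_rpow (by positivity) (norm_nonneg y), Real.inv_rpow ht2.le,
        Real.rpow_neg ht2.le, inv_inv, hsb]
    have htt : t ^ (-(b / 2)) * t ^ (b / 2) = 1 := by
      rw [← Real.rpow_add ht]; norm_num
    have hg_eq : g y = (L * Ex) * (‖y‖ ^ (-b) * Real.exp (-‖y‖ ^ 2 / (32 * t))) := by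
      rw [hgdef]
      dsimp only
      rw [hψy, hrs, hcdef]
      calc L * Ex * t ^ (-(b / 2)) * (t ^ (b / 2) * ‖y‖ ^ (-b)
            * Real.exp (-‖y‖ ^ 2 / (32 * t)))
          = (t ^ (-(b / 2)) * t ^ (b / 2)) * ((L * Ex) * (‖y‖ ^ (-b)
            * Real.exp (-‖y‖ ^ 2 / (32 * t)))) := by ring
        _ = _ := by rw [htt, one_mul]
    rw [hg_eq]
    -- the three factor inequalities
    have h1 : Real.sqrt (1 + ‖y‖ ^ 2) ^ (-b) ≤ ‖y‖ ^ (-b) := by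
      apply Real.rpow_le_rpow_of_nonpos hy0 _ (neg_nonpos.2 hb0)
      rw [Real.le_sqrt (norm_nonneg y)] <;> nlinarith
    have h2 : Real.log (2 + ‖y‖) ^ (-a) ≤ L := by
      rw [hLdef]
      apply Real.rpow_le_rpow_of_nonpos (Real.log_pos (by linarith [norm_nonneg x]))
        (Real.log_le_log (by positivity) (by linarith)) (neg_nonpos.2 ha0)
    have h3 : Real.exp (-‖y‖ ^ 2 / (16 * t))
        ≤ Ex * Real.exp (-‖y‖ ^ 2 / (32 * t)) := by
      rw [hExdef, ← Real.exp_add]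
      apply Real.exp_le_exp.2
      have h4 : 4 * ‖x‖ ^ 2 ≤ ‖y‖ ^ 2 := by nlinarith [norm_nonneg x, norm_nonneg y]
      rw [div_add_div _ _ (by positivity : (8 * t) ≠ 0) (by positivity : (32 * t) ≠ 0),
        div_le_div_iff₀ (by positivity) (by positivity)]
      nlinarith [mul_le_mul_of_nonneg_right h4 (sq_nonneg t), sq_nonneg t, mul_pos ht ht]
    calc Real.exp (-‖y‖ ^ 2 / (16 * t)) * Real.sqrt (1 + ‖y‖ ^ 2) ^ (-b)
          * Real.log (2 + ‖y‖) ^ (-a)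
        ≤ (Ex * Real.exp (-‖y‖ ^ 2 / (32 * t))) * ‖y‖ ^ (-b) * L := by
          apply mul_le_mul _ h2 (Real.rpow_nonneg (Real.log_nonneg (by linarith [norm_nonneg y])) _)
            (by positivity)
          exact mul_le_mul h3 h1 (Real.rpow_nonneg (Real.sqrt_nonneg _) _) (by positivity)
      _ = (L * Ex) * (‖y‖ ^ (-b) * Real.exp (-‖y‖ ^ 2 / (32 * t))) := by ring
  have hS_meas : MeasurableSet S := measurableSet_le measurable_const measurable_norm
  have step1 : (∫ y in S,
      Real.exp (-‖y‖ ^ 2 / (16 * t))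
        * Real.sqrt (1 + ‖y‖ ^ 2) ^ (-b) * Real.log (2 + ‖y‖) ^ (-a))
      ≤ ∫ y in S, g y := by
    apply integral_mono_of_nonneg
    · filter_upwards with y
      exact mul_nonneg (mul_nonneg (Real.exp_nonneg _)
        (Real.rpow_nonneg (Real.sqrt_nonneg _) _))
        (Real.rpow_nonneg (Real.log_nonneg (by linarith [norm_nonneg y])) _)
    · exact hg_int.integrableOn
    · filter_upwards [ae_restrict_mem hS_meas] with y hy
      exact key y hy
  have step2 : (∫ y in S, g y) ≤ ∫ y, g y :=
    setIntegral_le_integral hg_int (by filter_upwards with y; exact hg_nonneg y)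
  have step3 : (∫ y, g y) = c * (s ^ n * K) := by
    rw [hgdef]
    dsimp only
    rw [integral_const_mul]
    congr 1
    have := Measure.integral_comp_inv_smul_of_nonneg (volume : Measure (EuclideanSpace ℝ (Fin n)))
      ψ ht2.le
    rw [this, hKdef, smul_eq_mul, finrank_euclideanSpace_fin]
  have hsn : s ^ n = t ^ ((n : ℝ) / 2) := by
    rw [hsdef, Real.sqrt_eq_rpow, ← Real.rpow_natCast (t ^ ((1:ℝ)/2)) n,
      ← Real.rpow_mul ht.le]
    congr 1
    ring
  have e2 : t ^ (-(b / 2)) * t ^ ((n : ℝ) / 2) = t ^ (((n : ℝ) - b) / 2) := by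
    rw [← Real.rpow_add ht]
    congr 1
    ring
  have step4 : c * (s ^ n * K) ≤ (K + 1) * t ^ (((n : ℝ) - b) / 2) * L * Ex := by
    have heq : c * (s ^ n * K) = K * (t ^ (((n : ℝ) - b) / 2) * L * Ex) := by
      rw [hcdef, hsn]
      calc L * Ex * t ^ (-(b / 2)) * (t ^ ((n : ℝ) / 2) * K)
          = (t ^ (-(b / 2)) * t ^ ((n : ℝ) / 2)) * K * (L * Ex) := by ring
        _ = K * (t ^ (((n : ℝ) - b) / 2) * L * Ex) := by rw [e2]; ring
    rw [heq]
    have hM : 0 ≤ t ^ (((n : ℝ) - b) / 2) * L * Ex := by positivity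
    calc K * (t ^ (((n : ℝ) - b) / 2) * L * Ex)
        ≤ (K + 1) * (t ^ (((n : ℝ) - b) / 2) * L * Ex) :=
          mul_le_mul_of_nonneg_right (by linarith) hM
      _ = (K + 1) * t ^ (((n : ℝ) - b) / 2) * L * Ex := by ring
  calc (∫ y in S, Real.exp (-‖y‖ ^ 2 / (16 * t))
        * Real.sqrt (1 + ‖y‖ ^ 2) ^ (-b) * Real.log (2 + ‖y‖) ^ (-a))
      ≤ ∫ y in S, g y := step1
    _ ≤ ∫ y, g y := step2
    _ = c * (s ^ n * K) := step3
    _ ≤ (K + 1) * t ^ (((n : ℝ) - b) / 2) * L * Ex := step4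
end
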